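/- Let X_i, X_j be real random variables on a common probability space and let a > 0. Then Cov( f_a(X_i), f_a(X_j) ) = ∫_{−a}^{a} ∫_{−a}^{a} H_{(X_i,X_j)}(x,y) dx dy, where both sides are well-defined (f_a(X_i), f_a(X_j) are bounded and H_{(X_i,X_j)} is bounded). -/

import Mathlib

open MeasureTheory Filter Topology

noncomputable section

namespace Paper

variable {Ω : Type*} [MeasurableSpace Ω]

/-- Partial sum `S_n = X_1 + … + X_n` (1-based indexing). -/
def partialSum (X : ℕ → Ω → ℝ) (n : ℕ) (ω : Ω) : ℝ := ∑ j ∈ Finset.Icc 1 n, X j ω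

/-- The law of the random vector `(X_1, …, X_N)`. -/
def lawVec (P : Measure Ω) (X : ℕ → Ω → ℝ) (N : ℕ) : Measure (Fin N → ℝ) :=
  P.map (fun ω (i : Fin N) => X (1 + (i : ℕ)) ω)

/-- Strict stationarity: `(X_{1+k},…,X_{N+k}) ~ (X_1,…,X_N)` for all `k, N`. -/
def StrictlyStationary (P : Measure Ω) (X : ℕ → Ω → ℝ) : Prop :=
  ∀ k N : ℕ, P.map (fun ω (i : Fin N) => X (1 + k + (i : ℕ)) ω) = lawVec P X N

/-- Covariance (as a formula `E[fg] − E[f]E[g]`). -/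
def cov (P : Measure Ω) (f g : Ω → ℝ) : ℝ :=
  (∫ ω, f ω * g ω ∂P) - (∫ ω, f ω ∂P) * (∫ ω, g ω ∂P)

/-- Bounded measurable functions that are non-decreasing in each coordinate. -/
def BddMono {n : ℕ} (f : (Fin n → ℝ) → ℝ) : Prop :=
  Measurable f ∧ (∃ C, ∀ x, |f x| ≤ C) ∧
    ∀ x y : Fin n → ℝ, (∀ i, x i ≤ y i) → f x ≤ f y

/-- Association of a finite random vector. -/
def AssociatedVec (P : Measure Ω) {n : ℕ} (V : Ω → Fin n → ℝ) : Prop :=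
  ∀ f g : (Fin n → ℝ) → ℝ, BddMono f → BddMono g →
    0 ≤ cov P (fun ω => f (V ω)) (fun ω => g (V ω))

/-- Association of a sequence: every finite subcollection is associated. -/
def AssociatedSeq (P : Measure Ω) (X : ℕ → Ω → ℝ) : Prop :=
  ∀ (n : ℕ) (idx : Fin n → ℕ), (∀ i, 1 ≤ idx i) → StrictMono idx →
    AssociatedVec P (fun ω i => X (idx i) ω)

/-- Association of a pair of random variables. -/
def AssociatedPair (P : Measure Ω) (Y Z : Ω → ℝ) : Prop :=
  AssociatedVec P (fun ω => ![Y ω, Z ω])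

/-- Convolution of two measures on an additive monoid. -/
def mconv {E : Type*} [MeasurableSpace E] [Add E] (μ ν : Measure E) : Measure E :=
  (μ.prod ν).map (fun p => p.1 + p.2)

/-- `μ` is an `α`-stable law: `a X' + b X'' ~ (a^α+b^α)^{1/α} X + d`. -/
def IsStableLaw {E : Type*} [MeasurableSpace E] [AddCommGroup E] [Module ℝ E]
    (α : ℝ) (μ : Measure E) : Prop :=
  ∀ a b : ℝ, 0 < a → 0 < b → ∃ d : E,
    mconv (μ.map (fun x => a • x)) (μ.map (fun x => b • x))
      = μ.map (fun x => (a ^ α + b ^ α) ^ (1 / α) • x + d)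

/-- `μ` is a strictly `α`-stable law. -/
def IsStrictlyStableLaw {E : Type*} [MeasurableSpace E] [AddCommGroup E] [Module ℝ E]
    (α : ℝ) (μ : Measure E) : Prop :=
  ∀ a b : ℝ, 0 < a → 0 < b →
    mconv (μ.map (fun x => a • x)) (μ.map (fun x => b • x))
      = μ.map (fun x => (a ^ α + b ^ α) ^ (1 / α) • x)

/-- A sequence is jointly `α`-stable if all finite-dimensional laws are `α`-stable. -/
def JointlyStable (P : Measure Ω) (X : ℕ → Ω → ℝ) (α : ℝ) : Prop :=
  ∀ N : ℕ, IsStableLaw α (lawVec P X N)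

/-- Convergence in distribution, via bounded continuous test functions. -/
def TendstoInDistribution {E : Type*} [MeasurableSpace E] [TopologicalSpace E]
    (P : Measure Ω) (Y : ℕ → Ω → E) (μ : Measure E) : Prop :=
  ∀ f : BoundedContinuousFunction E ℝ,
    Tendsto (fun n => ∫ ω, f (Y n ω) ∂P) atTop (𝓝 (∫ x, f x ∂μ))

/-- The truncation `f_a`. -/
def trunc (a x : ℝ) : ℝ := max (-a) (min a x)

/-- Regular variation at `+∞` with index `ρ`. -/
def RegularlyVarying (g : ℝ → ℝ) (ρ : ℝ) : Prop :=
  (∀ᶠ x in atTop, 0 < g x) ∧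
    ∀ c : ℝ, 0 < c → Tendsto (fun x => g (c * x) / g x) atTop (𝓝 (c ^ ρ))

/-- The Hoeffding function `H_{(Y,Z)}(x,y) = P(Y≤x, Z≤y) − P(Y≤x)P(Z≤y)`. -/
def Hfun (P : Measure Ω) (Y Z : Ω → ℝ) (x y : ℝ) : ℝ :=
  (P {ω | Y ω ≤ x ∧ Z ω ≤ y}).toReal -
    (P {ω | Y ω ≤ x}).toReal * (P {ω | Z ω ≤ y}).toReal

/-- A Lévy measure: no mass at `0` and `∫ min(‖x‖²,1) dν < ∞`. -/
def IsLevyMeasure {E : Type*} [MeasurableSpace E] [NormedAddCommGroup E]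
    (ν : Measure E) : Prop :=
  ν {0} = 0 ∧ (∫⁻ x, ENNReal.ofReal (min (‖x‖ ^ 2) 1) ∂ν) < ⊤

/-- `n E[h(V_n)] → ∫ h dν` for bounded continuous `h` vanishing near `0`. -/
def SmallVagueTendsto {E : Type*} [MeasurableSpace E] [NormedAddCommGroup E]
    (P : Measure Ω) (V : ℕ → Ω → E) (ν : Measure E) : Prop :=
  ∀ h : E → ℝ, Continuous h → (∃ C, ∀ x, |h x| ≤ C) →
    (∃ ε > 0, ∀ x, ‖x‖ < ε → h x = 0) →
    Tendsto (fun n : ℕ => (n : ℝ) * ∫ ω, h (V n ω) ∂P) atTop (𝓝 (∫ x, h x ∂ν))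

/-- Standing assumptions (A1)–(A4). -/
structure Standing (P : Measure Ω) (X : ℕ → Ω → ℝ) (α : ℝ) (B : ℕ → ℝ)
    (ν : (N : ℕ) → Measure (Fin N → ℝ)) : Prop where
  meas : ∀ j, Measurable (X j)
  alpha_pos : 0 < α
  alpha_lt_two : α < 2
  tail : ∃ ℓ : ℝ → ℝ, RegularlyVarying ℓ 0 ∧
    ∀ x : ℝ, 0 < x → (P {ω | x < |X 1 ω|}).toReal = x ^ (-α) * ℓ x
  B_pos : ∀ n, 0 < B n
  B_norm : Tendsto (fun n : ℕ => (n : ℝ) * (P {ω | B n < |X 1 ω|}).toReal) atTop (𝓝 1)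
  levy : ∀ N, IsLevyMeasure (ν N)
  vague : ∀ N : ℕ, SmallVagueTendsto P (fun n ω (i : Fin N) => X (1 + (i : ℕ)) ω / B n) (ν N)
  symm : α = 1 → ∀ N, lawVec P X N = P.map (fun ω (i : Fin N) => -X (1 + (i : ℕ)) ω)
  mean_zero : 1 < α → Integrable (X 1) P ∧ (∫ ω, X 1 ω ∂P) = 0

/-- The limit measures `ν_{{1,j}}` for the pairs `(X_1, X_j)`. -/
def PairLevy (P : Measure Ω) (X : ℕ → Ω → ℝ) (B : ℕ → ℝ)
    (ν2 : ℕ → Measure (ℝ × ℝ)) : Prop :=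
  ∀ j : ℕ, 2 ≤ j → IsLevyMeasure (ν2 j) ∧
    SmallVagueTendsto P (fun n ω => (X 1 ω / B n, X j ω / B n)) (ν2 j)

/-- Assumption (A5). -/
def SumCovAssumption (P : Measure Ω) (X : ℕ → Ω → ℝ) (B : ℕ → ℝ)
    (ν2 : ℕ → Measure (ℝ × ℝ)) : Prop :=
  (∀ a : ℝ, 0 < a → Summable (fun j : ℕ =>
      cov P (fun ω => trunc a (X 1 ω)) (fun ω => trunc a (X (j + 2) ω)))) ∧
  (∃ ρ : ℝ, RegularlyVarying (fun a => ∑' j : ℕ,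
      cov P (fun ω => trunc a (X 1 ω)) (fun ω => trunc a (X (j + 2) ω))) ρ) ∧
  Summable (fun j : ℕ => ∫ p : ℝ × ℝ, trunc 1 p.1 * trunc 1 p.2 ∂(ν2 (j + 2))) ∧
  Tendsto (fun n : ℕ => (n : ℝ) * ∑' j : ℕ,
      cov P (fun ω => trunc 1 (X 1 ω / B n)) (fun ω => trunc 1 (X (j + 2) ω / B n)))
    atTop (𝓝 (∑' j : ℕ, ∫ p : ℝ × ℝ, trunc 1 p.1 * trunc 1 p.2 ∂(ν2 (j + 2))))


section Statement7Aux

lemma measurable_trunc (a : ℝ) : Measurable (trunc a) :=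
  (continuous_const.max (continuous_const.min continuous_id)).measurable

lemma abs_trunc_le {a : ℝ} (ha : 0 < a) (x : ℝ) : |trunc a x| ≤ a := by
  rw [abs_le, trunc]
  exact ⟨le_max_left _ _, max_le (by linarith) (min_le_left _ _)⟩

lemma restrict_Iio_toReal {a : ℝ} (ha : 0 < a) (X : ℝ) :
    ((volume.restrict (Set.Ioc (-a) a)) (Set.Iio X)).toReal = trunc a X + a := by
  rw [Measure.restrict_apply measurableSet_Iio]
  rcases le_or_gt X (-a) with h | h
  · have he : Set.Iio X ∩ Set.Ioc (-a) a = ∅ := by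
      ext t
      simp only [Set.mem_inter_iff, Set.mem_Iio, Set.mem_Ioc, Set.mem_empty_iff_false,
        iff_false, not_and]
      intro h1 h2; linarith
    have ht : trunc a X = -a := by
      rw [trunc, min_eq_right (by linarith), max_eq_left h]
    rw [he, ht]; simp
  · rcases le_or_gt X a with h2 | h2
    · have he : Set.Iio X ∩ Set.Ioc (-a) a = Set.Ioo (-a) X := by
        ext t
        simp only [Set.mem_inter_iff, Set.mem_Iio, Set.mem_Ioc, Set.mem_Ioo]
        constructor
        · rintro ⟨h1, h2', _⟩; exact ⟨h2', h1⟩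
        · rintro ⟨h1, h3⟩; exact ⟨h3, h1, by linarith⟩
      have ht : trunc a X = X := by
        rw [trunc, min_eq_right h2, max_eq_right h.le]
      rw [he, ht, Real.volume_Ioo, ENNReal.toReal_ofReal (by linarith)]; ring
    · have he : Set.Iio X ∩ Set.Ioc (-a) a = Set.Ioc (-a) a :=
        Set.inter_eq_self_of_subset_right fun t ht => lt_of_le_of_lt ht.2 h2
      have ht : trunc a X = a := by
        rw [trunc, min_eq_left h2.le, max_eq_right (by linarith)]
      rw [he, ht, Real.volume_Ioc, ENNReal.toReal_ofReal (by linarith)]; ring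

lemma hfun_eq_compl {Ω' : Type*} [MeasurableSpace Ω'] (P : Measure Ω') [IsProbabilityMeasure P]
    (Xi Xj : Ω' → ℝ) (hmi : Measurable Xi) (hmj : Measurable Xj) (x y : ℝ) :
    Hfun P Xi Xj x y =
      (P {ω | x < Xi ω ∧ y < Xj ω}).toReal -
        (P {ω | x < Xi ω}).toReal * (P {ω | y < Xj ω}).toReal := by
  have hAm : MeasurableSet {ω | Xi ω ≤ x} := hmi measurableSet_Iic
  have hBm : MeasurableSet {ω | Xj ω ≤ y} := hmj measurableSet_Iic
  set A : Set Ω' := {ω | Xi ω ≤ x} with hA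
  set B : Set Ω' := {ω | Xj ω ≤ y} with hB
  have e1 : {ω | x < Xi ω} = Aᶜ := by ext ω; simp [hA, not_le]
  have e2 : {ω | y < Xj ω} = Bᶜ := by ext ω; simp [hB, not_le]
  have e3 : {ω | x < Xi ω ∧ y < Xj ω} = (A ∪ B)ᶜ := by
    ext ω; simp [hA, hB, not_or, not_le]
  have e4 : {ω | Xi ω ≤ x ∧ Xj ω ≤ y} = A ∩ B := by
    ext ω; simp [hA, hB]
  have hfin : ∀ s : Set Ω', P s ≠ ⊤ := fun s => measure_ne_top P s
  have hcA : (P Aᶜ).toReal = 1 - (P A).toReal := by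
    rw [prob_compl_eq_one_sub hAm,
      ENNReal.toReal_sub_of_le prob_le_one ENNReal.one_ne_top, ENNReal.toReal_one]
  have hcB : (P Bᶜ).toReal = 1 - (P B).toReal := by
    rw [prob_compl_eq_one_sub hBm,
      ENNReal.toReal_sub_of_le prob_le_one ENNReal.one_ne_top, ENNReal.toReal_one]
  have hcU : (P (A ∪ B)ᶜ).toReal = 1 - (P (A ∪ B)).toReal := by
    rw [prob_compl_eq_one_sub (hAm.union hBm),
      ENNReal.toReal_sub_of_le prob_le_one ENNReal.one_ne_top, ENNReal.toReal_one]
  have h4 : (P (A ∪ B)).toReal + (P (A ∩ B)).toReal = (P A).toReal + (P B).toReal := by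
    rw [← ENNReal.toReal_add (hfin _) (hfin _), ← ENNReal.toReal_add (hfin _) (hfin _),
      measure_union_add_inter A hBm]
  rw [Hfun, e1, e2, e3, e4, hcA, hcB, hcU]
  linear_combination h4

end Statement7Aux

/-- Hoeffding-type formula (Yu's Lemma 3.1 applied to `f_a`):
`Cov(f_a(X_i), f_a(X_j)) = ∫_{−a}^{a}∫_{−a}^{a} H_{(X_i,X_j)}(x,y) dx dy`. -/
theorem statement7 {Ω : Type*} [MeasurableSpace Ω] (P : Measure Ω) [IsProbabilityMeasure P]
    (Xi Xj : Ω → ℝ) (hmi : Measurable Xi) (hmj : Measurable Xj)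
    (a : ℝ) (ha : 0 < a) :
    cov P (fun ω => trunc a (Xi ω)) (fun ω => trunc a (Xj ω))
      = ∫ x in Set.Ioc (-a) a, ∫ y in Set.Ioc (-a) a, Hfun P Xi Xj x y := by
  set μ : Measure ℝ := volume.restrict (Set.Ioc (-a) a) with hμdef
  haveI : IsFiniteMeasure μ := by rw [hμdef]; exact ⟨by
    rw [Measure.restrict_apply_univ]; exact measure_Ioc_lt_top⟩
  -- measurability of the various measure-valued maps
  have hFm : Measurable fun ω => μ (Set.Iio (Xi ω)) := by
    have hs : MeasurableSet {q : Ω × ℝ | q.2 < Xi q.1} :=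
      measurableSet_lt measurable_snd (hmi.comp measurable_fst)
    exact measurable_measure_prodMk_left hs
  have hGm : Measurable fun ω => μ (Set.Iio (Xj ω)) := by
    have hs : MeasurableSet {q : Ω × ℝ | q.2 < Xj q.1} :=
      measurableSet_lt measurable_snd (hmj.comp measurable_fst)
    exact measurable_measure_prodMk_left hs
  have hLm : Measurable fun x : ℝ => P {ω | x < Xi ω} := by
    have hs : MeasurableSet {q : ℝ × Ω | q.1 < Xi q.2} :=
      measurableSet_lt measurable_fst (hmi.comp measurable_snd)
    exact measurable_measure_prodMk_left hs
  have hMm : Measurable fun y : ℝ => P {ω | y < Xj ω} := by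
    have hs : MeasurableSet {q : ℝ × Ω | q.1 < Xj q.2} :=
      measurableSet_lt measurable_fst (hmj.comp measurable_snd)
    exact measurable_measure_prodMk_left hs
  have hKm : Measurable fun p : ℝ × ℝ => P {ω | p.1 < Xi ω ∧ p.2 < Xj ω} := by
    have hs : MeasurableSet {q : (ℝ × ℝ) × Ω | q.1.1 < Xi q.2 ∧ q.1.2 < Xj q.2} :=
      (measurableSet_lt measurable_fst.fst (hmi.comp measurable_snd)).inter
        (measurableSet_lt measurable_fst.snd (hmj.comp measurable_snd))
    exact measurable_measure_prodMk_left hs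
  -- Fubini-type swaps on the lintegral level
  have swap1 : ∫⁻ ω, μ (Set.Iio (Xi ω)) ∂P = ∫⁻ x, P {ω | x < Xi ω} ∂μ := by
    have hs : MeasurableSet {q : ℝ × Ω | q.1 < Xi q.2} :=
      measurableSet_lt measurable_fst (hmi.comp measurable_snd)
    exact (Measure.prod_apply_symm (μ := μ) (ν := P) hs).symm.trans (Measure.prod_apply hs)
  have swap2 : ∫⁻ ω, μ (Set.Iio (Xj ω)) ∂P = ∫⁻ y, P {ω | y < Xj ω} ∂μ := by
    have hs : MeasurableSet {q : ℝ × Ω | q.1 < Xj q.2} :=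
      measurableSet_lt measurable_fst (hmj.comp measurable_snd)
    exact (Measure.prod_apply_symm (μ := μ) (ν := P) hs).symm.trans (Measure.prod_apply hs)
  have swap3 : ∫⁻ ω, μ (Set.Iio (Xi ω)) * μ (Set.Iio (Xj ω)) ∂P
      = ∫⁻ p : ℝ × ℝ, P {ω | p.1 < Xi ω ∧ p.2 < Xj ω} ∂(μ.prod μ) := by
    have hs : MeasurableSet {q : (ℝ × ℝ) × Ω | q.1.1 < Xi q.2 ∧ q.1.2 < Xj q.2} :=
      (measurableSet_lt measurable_fst.fst (hmi.comp measurable_snd)).inter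
        (measurableSet_lt measurable_fst.snd (hmj.comp measurable_snd))
    have h1 : ∀ ω, μ (Set.Iio (Xi ω)) * μ (Set.Iio (Xj ω))
        = (μ.prod μ) ((fun p : ℝ × ℝ => (p, ω)) ⁻¹'
            {q : (ℝ × ℝ) × Ω | q.1.1 < Xi q.2 ∧ q.1.2 < Xj q.2}) := by
      intro ω
      have h2 : ((fun p : ℝ × ℝ => (p, ω)) ⁻¹'
          {q : (ℝ × ℝ) × Ω | q.1.1 < Xi q.2 ∧ q.1.2 < Xj q.2})
          = Set.Iio (Xi ω) ×ˢ Set.Iio (Xj ω) := by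
        ext p; simp [Set.mem_prod]
      rw [h2, Measure.prod_prod]
    simp_rw [h1]
    exact (Measure.prod_apply_symm hs).symm.trans (Measure.prod_apply hs)
  -- Bochner-integral identifications
  have EF : ∫ ω, (trunc a (Xi ω) + a) ∂P = ∫ x, (P {ω | x < Xi ω}).toReal ∂μ := by
    have h1 : ∫ ω, (trunc a (Xi ω) + a) ∂P = ∫ ω, (μ (Set.Iio (Xi ω))).toReal ∂P := by
      refine integral_congr_ae (ae_of_all _ fun ω => ?_)
      rw [hμdef]; exact (restrict_Iio_toReal ha _).symm
    rw [h1, integral_toReal hFm.aemeasurable (ae_of_all _ fun ω => measure_lt_top μ _), swap1,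
      ← integral_toReal hLm.aemeasurable (ae_of_all _ fun x => measure_lt_top P _)]
  have EG : ∫ ω, (trunc a (Xj ω) + a) ∂P = ∫ y, (P {ω | y < Xj ω}).toReal ∂μ := by
    have h1 : ∫ ω, (trunc a (Xj ω) + a) ∂P = ∫ ω, (μ (Set.Iio (Xj ω))).toReal ∂P := by
      refine integral_congr_ae (ae_of_all _ fun ω => ?_)
      rw [hμdef]; exact (restrict_Iio_toReal ha _).symm
    rw [h1, integral_toReal hGm.aemeasurable (ae_of_all _ fun ω => measure_lt_top μ _), swap2,
      ← integral_toReal hMm.aemeasurable (ae_of_all _ fun y => measure_lt_top P _)]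
  have EFG : ∫ ω, (trunc a (Xi ω) + a) * (trunc a (Xj ω) + a) ∂P
      = ∫ p : ℝ × ℝ, (P {ω | p.1 < Xi ω ∧ p.2 < Xj ω}).toReal ∂(μ.prod μ) := by
    have h1 : ∫ ω, (trunc a (Xi ω) + a) * (trunc a (Xj ω) + a) ∂P
        = ∫ ω, (μ (Set.Iio (Xi ω)) * μ (Set.Iio (Xj ω))).toReal ∂P := by
      refine integral_congr_ae (ae_of_all _ fun ω => ?_)
      show (trunc a (Xi ω) + a) * (trunc a (Xj ω) + a)
          = (μ (Set.Iio (Xi ω)) * μ (Set.Iio (Xj ω))).toReal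
      rw [ENNReal.toReal_mul, hμdef, restrict_Iio_toReal ha, restrict_Iio_toReal ha]
    rw [h1, integral_toReal (show Measurable fun ω => μ (Set.Iio (Xi ω)) * μ (Set.Iio (Xj ω)) from hFm.mul hGm).aemeasurable
        (ae_of_all _ fun ω =>
          ENNReal.mul_lt_top (measure_lt_top μ _) (measure_lt_top μ _)),
      swap3, ← integral_toReal hKm.aemeasurable (ae_of_all _ fun p => measure_lt_top P _)]
  -- integrability facts
  have hti : Integrable (fun ω => trunc a (Xi ω)) P := by
    refine Integrable.mono' (integrable_const a)
      ((measurable_trunc a).comp hmi).aestronglyMeasurable (ae_of_all _ fun ω => ?_)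
    simpa [Real.norm_eq_abs] using abs_trunc_le ha (Xi ω)
  have htj : Integrable (fun ω => trunc a (Xj ω)) P := by
    refine Integrable.mono' (integrable_const a)
      ((measurable_trunc a).comp hmj).aestronglyMeasurable (ae_of_all _ fun ω => ?_)
    simpa [Real.norm_eq_abs] using abs_trunc_le ha (Xj ω)
  have htij : Integrable (fun ω => trunc a (Xi ω) * trunc a (Xj ω)) P := by
    refine Integrable.mono' (integrable_const (a * a))
      (((measurable_trunc a).comp hmi).mul
        ((measurable_trunc a).comp hmj)).aestronglyMeasurable (ae_of_all _ fun ω => ?_)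
    rw [Real.norm_eq_abs, abs_mul]
    exact mul_le_mul (abs_trunc_le ha _) (abs_trunc_le ha _) (abs_nonneg _) ha.le
  -- expansion of the shifted integrals
  have hexp : ∫ ω, (trunc a (Xi ω) + a) * (trunc a (Xj ω) + a) ∂P
      = (∫ ω, trunc a (Xi ω) * trunc a (Xj ω) ∂P)
        + (a * ∫ ω, trunc a (Xj ω) ∂P + (a * ∫ ω, trunc a (Xi ω) ∂P + a * a)) := by
    have h1 : (fun ω => (trunc a (Xi ω) + a) * (trunc a (Xj ω) + a))
        = fun ω => trunc a (Xi ω) * trunc a (Xj ω)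
            + (a * trunc a (Xj ω) + (a * trunc a (Xi ω) + a * a)) := by
      funext ω; ring
    have i3 : Integrable (fun ω => a * trunc a (Xi ω) + a * a) P :=
      (hti.const_mul a).add (integrable_const _)
    have i2 : Integrable (fun ω => a * trunc a (Xj ω) + (a * trunc a (Xi ω) + a * a)) P :=
      (htj.const_mul a).add i3
    rw [h1, integral_add htij i2, integral_add (htj.const_mul a) i3,
      integral_add (hti.const_mul a) (integrable_const (a * a)),
      integral_const_mul, integral_const_mul, integral_const]
    simp
  have hplus_i : ∫ ω, (trunc a (Xi ω) + a) ∂P = (∫ ω, trunc a (Xi ω) ∂P) + a := by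
    rw [integral_add hti (integrable_const a), integral_const]; simp
  have hplus_j : ∫ ω, (trunc a (Xj ω) + a) ∂P = (∫ ω, trunc a (Xj ω) ∂P) + a := by
    rw [integral_add htj (integrable_const a), integral_const]; simp
  -- the right-hand side as an integral over the product
  have htoReal_le_one : ∀ s : Set Ω, (P s).toReal ≤ 1 := fun s => by
    simpa using ENNReal.toReal_mono ENNReal.one_ne_top prob_le_one
  have hKint : Integrable
      (fun p : ℝ × ℝ => (P {ω | p.1 < Xi ω ∧ p.2 < Xj ω}).toReal) (μ.prod μ) := by
    refine Integrable.mono' (integrable_const 1)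
      hKm.ennreal_toReal.aestronglyMeasurable (ae_of_all _ fun p => ?_)
    rw [Real.norm_eq_abs, abs_of_nonneg ENNReal.toReal_nonneg]
    exact htoReal_le_one _
  have hLMint : Integrable
      (fun p : ℝ × ℝ => (P {ω | p.1 < Xi ω}).toReal * (P {ω | p.2 < Xj ω}).toReal)
      (μ.prod μ) := by
    refine Integrable.mono' (integrable_const 1)
      ((hLm.ennreal_toReal.comp measurable_fst).mul
        (hMm.ennreal_toReal.comp measurable_snd)).aestronglyMeasurable
      (ae_of_all _ fun p => ?_)
    rw [Real.norm_eq_abs, abs_mul, abs_of_nonneg ENNReal.toReal_nonneg,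
      abs_of_nonneg ENNReal.toReal_nonneg]
    exact mul_le_one₀ (htoReal_le_one _) ENNReal.toReal_nonneg (htoReal_le_one _)
  have hRHS : ∫ x, (∫ y, Hfun P Xi Xj x y ∂μ) ∂μ
      = ∫ p : ℝ × ℝ, ((P {ω | p.1 < Xi ω ∧ p.2 < Xj ω}).toReal
          - (P {ω | p.1 < Xi ω}).toReal * (P {ω | p.2 < Xj ω}).toReal) ∂(μ.prod μ) := by
    have hsubint : Integrable (fun p : ℝ × ℝ => (P {ω | p.1 < Xi ω ∧ p.2 < Xj ω}).toReal
        - (P {ω | p.1 < Xi ω}).toReal * (P {ω | p.2 < Xj ω}).toReal) (μ.prod μ) :=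
      hKint.sub hLMint
    rw [integral_prod _ hsubint]
    refine integral_congr_ae (ae_of_all _ fun x => ?_)
    exact integral_congr_ae (ae_of_all _ fun y => hfun_eq_compl P Xi Xj hmi hmj x y)
  have hsplit : ∫ p : ℝ × ℝ, ((P {ω | p.1 < Xi ω ∧ p.2 < Xj ω}).toReal
        - (P {ω | p.1 < Xi ω}).toReal * (P {ω | p.2 < Xj ω}).toReal) ∂(μ.prod μ)
      = (∫ p : ℝ × ℝ, (P {ω | p.1 < Xi ω ∧ p.2 < Xj ω}).toReal ∂(μ.prod μ))
        - (∫ x, (P {ω | x < Xi ω}).toReal ∂μ) * ∫ y, (P {ω | y < Xj ω}).toReal ∂μ := by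
    have hsubint : Integrable (fun p : ℝ × ℝ => (P {ω | p.1 < Xi ω ∧ p.2 < Xj ω}).toReal
        - (P {ω | p.1 < Xi ω}).toReal * (P {ω | p.2 < Xj ω}).toReal) (μ.prod μ) :=
      hKint.sub hLMint
    rw [integral_sub hKint hLMint,
      integral_prod_mul (fun x : ℝ => (P {ω | x < Xi ω}).toReal)
        (fun y : ℝ => (P {ω | y < Xj ω}).toReal)]
  -- put everything together
  have e5 := EFG.symm.trans hexp
  have e6 := EF.symm.trans hplus_i
  have e7 := EG.symm.trans hplus_j
  simp only [cov]
  rw [hRHS, hsplit, e5, e6, e7]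
  ring


end Paper
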